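/- Fix $c > 1$ and let $r(u,v) = \sqrt{(v-u)^2 + 4cuv}$ and $h(u,v) = \frac{2cu + (v-u) - r(u,v)}{u}$ for $u, v \in (0,1)$. Then $\frac{\partial}{\partial u} \ln h(u,v) = \frac{v}{u\, r(u,v)}$ and $\frac{\partial}{\partial u} \ln h(v,u) = -\frac{1}{r(u,v)}$. -/

import Mathlib

noncomputable def rLD (c u v : ℝ) : ℝ := Real.sqrt ((v - u) ^ 2 + 4 * c * u * v)

noncomputable def hLD (c u v : ℝ) : ℝ := (2 * c * u + (v - u) - rLD c u v) / u

theorem log_hLD_deriv (c u v : ℝ) (hc : 1 < c)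
    (hu : u ∈ Set.Ioo (0:ℝ) 1) (hv : v ∈ Set.Ioo (0:ℝ) 1) :
    HasDerivAt (fun u' => Real.log (hLD c u' v)) (v / (u * rLD c u v)) u ∧
    HasDerivAt (fun u' => Real.log (hLD c v u')) (-(1 / rLD c u v)) u := by
  obtain ⟨hu0, hu1⟩ := hu
  obtain ⟨hv0, hv1⟩ := hv
  have hc0 : (0:ℝ) < c := lt_trans one_pos hc
  have hgpos : (0:ℝ) < (v - u) ^ 2 + 4 * c * u * v := by positivity
  have hrpos : 0 < rLD c u v := Real.sqrt_pos.mpr hgpos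
  have hr2 : (rLD c u v) ^ 2 = (v - u) ^ 2 + 4 * c * u * v := Real.sq_sqrt hgpos.le
  set r := rLD c u v with hrdef
  -- positivity of the two numerators
  have hN1 : 0 < 2 * c * u + (v - u) - r := by
    have h1 : r < 2 * c * u + (v - u) := by
      rw [hrdef, rLD]
      rw [show (2 * c * u + (v - u)) = Real.sqrt ((2 * c * u + (v - u)) ^ 2) from
        (Real.sqrt_sq (by nlinarith)).symm]
      apply Real.sqrt_lt_sqrt hgpos.le
      nlinarith [mul_pos (mul_pos (mul_pos hc0 hu0) hu0) (sub_pos.mpr hc)]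
    linarith
  have hrsymm : rLD c v u = r := by
    rw [hrdef, rLD, rLD]; congr 1; ring
  have hN2 : 0 < 2 * c * v + (u - v) - r := by
    have h1 : r < 2 * c * v + (u - v) := by
      rw [hrdef, rLD]
      rw [show (2 * c * v + (u - v)) = Real.sqrt ((2 * c * v + (u - v)) ^ 2) from
        (Real.sqrt_sq (by nlinarith)).symm]
      apply Real.sqrt_lt_sqrt hgpos.le
      nlinarith [mul_pos (mul_pos (mul_pos hc0 hv0) hv0) (sub_pos.mpr hc)]
    linarith
  constructor
  · -- first derivative
    have hg : HasDerivAt (fun u' : ℝ => (v - u') ^ 2 + 4 * c * u' * v)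
        (-(2 * (v - u)) + 4 * c * v) u := by
      have h1 : HasDerivAt (fun u' : ℝ => (v - u') ^ 2) (-(2 * (v - u))) u := by
        have := ((hasDerivAt_id u).const_sub v).pow 2
        refine this.congr_deriv (Eq.symm ?_)
        simp
      have h2 : HasDerivAt (fun u' : ℝ => 4 * c * u' * v) (4 * c * v) u := by
        have := ((hasDerivAt_id u).const_mul (4 * c)).mul_const v
        refine this.congr_deriv (Eq.symm ?_)
        ring
      exact h1.add h2
    have hsqrt : HasDerivAt (fun u' : ℝ => Real.sqrt ((v - u') ^ 2 + 4 * c * u' * v))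
        ((1 / (2 * r)) * (-(2 * (v - u)) + 4 * c * v)) u := by
      have := (Real.hasDerivAt_sqrt (ne_of_gt hgpos)).comp u hg
      exact this
    have hnum : HasDerivAt (fun u' : ℝ => 2 * c * u' + (v - u') -
        Real.sqrt ((v - u') ^ 2 + 4 * c * u' * v))
        (2 * c + (-1) - (1 / (2 * r)) * (-(2 * (v - u)) + 4 * c * v)) u := by
      have hlin : HasDerivAt (fun u' : ℝ => 2 * c * u' + (v - u')) (2 * c + (-1)) u := by
        have h1 := (hasDerivAt_id u).const_mul (2 * c)
        have h2 := (hasDerivAt_id u).const_sub v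
        have := h1.add h2
        refine this.congr_deriv (Eq.symm ?_)
        ring
      exact hlin.sub hsqrt
    have hdiv := hnum.div (hasDerivAt_id u) (ne_of_gt hu0)
    have hsr : Real.sqrt ((v - u) ^ 2 + 4 * c * u * v) = r := rfl
    have hne : (2 * c * u + (v - u) - Real.sqrt ((v - u) ^ 2 + 4 * c * u * v)) / u ≠ 0 := by
      rw [hsr]
      exact ne_of_gt (div_pos hN1 hu0)
    simp only [hLD, rLD]
    refine (hdiv.log hne).congr_deriv (Eq.symm ?_)
    rw [hsr]
    simp only [id, mul_one, Pi.div_apply, hsr]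
    have h1 : u ≠ 0 := ne_of_gt hu0
    have h2 : r ≠ 0 := ne_of_gt hrpos
    have h3 : 2 * c * u + (v - u) - r ≠ 0 := ne_of_gt hN1
    field_simp
    rw [eq_div_iff (ne_of_gt (by linarith))]
    linear_combination (-2) * hr2
  · -- second derivative
    have hg : HasDerivAt (fun u' : ℝ => (u' - v) ^ 2 + 4 * c * v * u')
        (2 * (u - v) + 4 * c * v) u := by
      have h1 : HasDerivAt (fun u' : ℝ => (u' - v) ^ 2) (2 * (u - v)) u := by
        have := ((hasDerivAt_id u).sub_const v).pow 2
        refine this.congr_deriv (Eq.symm ?_)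
        simp
      have h2 : HasDerivAt (fun u' : ℝ => 4 * c * v * u') (4 * c * v) u := by
        have := (hasDerivAt_id u).const_mul (4 * c * v)
        refine this.congr_deriv (Eq.symm ?_)
        ring
      exact h1.add h2
    have hg2pos : (0:ℝ) < (u - v) ^ 2 + 4 * c * v * u := by positivity
    have hg2r : Real.sqrt ((u - v) ^ 2 + 4 * c * v * u) = r := by
      rw [hrdef, rLD]; congr 1; ring
    have hsqrt : HasDerivAt (fun u' : ℝ => Real.sqrt ((u' - v) ^ 2 + 4 * c * v * u'))
        ((1 / (2 * r)) * (2 * (u - v) + 4 * c * v)) u := by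
      have := (Real.hasDerivAt_sqrt (ne_of_gt hg2pos)).comp u hg
      rw [hg2r] at this
      exact this
    have hnum : HasDerivAt (fun u' : ℝ => 2 * c * v + (u' - v) -
        Real.sqrt ((u' - v) ^ 2 + 4 * c * v * u'))
        (1 - (1 / (2 * r)) * (2 * (u - v) + 4 * c * v)) u := by
      have hlin : HasDerivAt (fun u' : ℝ => 2 * c * v + (u' - v)) (1:ℝ) u := by
        have := ((hasDerivAt_id u).sub_const v).const_add (2 * c * v)
        exact this
      exact hlin.sub hsqrt
    have hdiv := hnum.div_const v
    have hne : (2 * c * v + (u - v) -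
        Real.sqrt ((u - v) ^ 2 + 4 * c * v * u)) / v ≠ 0 := by
      rw [hg2r]
      exact ne_of_gt (div_pos hN2 hv0)
    simp only [hLD, rLD]
    refine (hdiv.log hne).congr_deriv (Eq.symm ?_)
    rw [hg2r]
    have h2 : r ≠ 0 := ne_of_gt hrpos
    have h3 : 2 * c * v + (u - v) - r ≠ 0 := ne_of_gt hN2
    field_simp
    rw [eq_div_iff (ne_of_gt (by linarith))]
    ring
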